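/- Within one epoch of local GD with γ ≤ 1/(4LH), Σ_{t=t_p}^{t_{p+1}−1} [(3/2)L V_t − (f(x̂_t) − f(x_*))] ≤ −(1/2) Σ_{t=t_p}^{t_{p+1}−1} (f(x̂_t) − f(x_*)) + 12Lγ²H²σ² (t_{p+1} − t_p). -/

import Mathlib

open Finset RealInnerProductSpace

/-- Average of vectors. -/
noncomputable def avgV {d M : ℕ} (x : Fin M → EuclideanSpace ℝ (Fin d)) :
    EuclideanSpace ℝ (Fin d) := (1 / (M : ℝ)) • ∑ m, x m

/-- Average of reals. -/
noncomputable def avgR {M : ℕ} (a : Fin M → ℝ) : ℝ := (1 / (M : ℝ)) * ∑ m, a m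


lemma normsq_sum_le {d : ℕ} (s : Finset ℕ) (v : ℕ → EuclideanSpace ℝ (Fin d)) :
    ‖∑ j ∈ s, v j‖^2 ≤ s.card * ∑ j ∈ s, ‖v j‖^2 := by
  calc ‖∑ j ∈ s, v j‖^2 ≤ (∑ j ∈ s, ‖v j‖)^2 :=
        pow_le_pow_left₀ (norm_nonneg _) (norm_sum_le _ _) 2
    _ ≤ s.card * ∑ j ∈ s, ‖v j‖^2 := sq_sum_le_card_mul_sum_sq

lemma young3 {d : ℕ} (a b c : EuclideanSpace ℝ (Fin d)) :
    ‖a + b + c‖^2 ≤ 4*‖a‖^2 + 4*‖b‖^2 + 2*‖c‖^2 := by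
  have h : ‖a + b + c‖ ≤ ‖a‖ + ‖b‖ + ‖c‖ := norm_add₃_le
  have h0 := norm_nonneg (a + b + c)
  nlinarith [sq_nonneg (‖a‖ - ‖b‖), sq_nonneg (‖a‖ + ‖b‖ - ‖c‖), norm_nonneg a,
    norm_nonneg b, norm_nonneg c]

lemma var_le_second {d M : ℕ} (hM : 0 < M) (v : Fin M → EuclideanSpace ℝ (Fin d)) :
    ∑ m, ‖v m - (1/(M:ℝ)) • ∑ m', v m'‖^2 ≤ ∑ m, ‖v m‖^2 := by
  have hMne : (M:ℝ) ≠ 0 := Nat.cast_ne_zero.mpr hM.ne'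
  set S := ∑ m', v m' with hS
  have expand : ∀ m : Fin M, ‖v m - (1/(M:ℝ)) • S‖^2
      = ‖v m‖^2 - 2*⟪v m, (1/(M:ℝ)) • S⟫ + ‖(1/(M:ℝ)) • S‖^2 := by
    intro m; rw [norm_sub_sq_real]
  rw [Finset.sum_congr rfl (fun m _ => expand m)]
  rw [Finset.sum_add_distrib, Finset.sum_sub_distrib, Finset.sum_const, ← Finset.mul_sum,
    ← sum_inner]
  have h1 : ⟪S, (1/(M:ℝ)) • S⟫ = (1/(M:ℝ)) * ‖S‖^2 := by
    rw [real_inner_smul_right, real_inner_self_eq_norm_sq]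
  have h2 : ‖(1/(M:ℝ)) • S‖^2 = (1/(M:ℝ))^2 * ‖S‖^2 := by
    rw [norm_smul]; simp [abs_of_nonneg]; ring
  rw [h1, h2]
  simp only [card_univ, Fintype.card_fin, nsmul_eq_mul]
  have h3 : (M:ℝ) * ((1/(M:ℝ))^2 * ‖S‖^2) = (1/(M:ℝ)) * ‖S‖^2 := by
    field_simp
  rw [h3]
  have h4 : (0:ℝ) ≤ (1/(M:ℝ)) * ‖S‖^2 := by positivity
  linarith [h4]

lemma gauss_sum_real (n : ℕ) : ∑ k ∈ Finset.range n, (k:ℝ) = n*(n-1)/2 := by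
  induction n with
  | zero => simp
  | succ n ih => rw [Finset.sum_range_succ, ih]; push_cast; ring

set_option maxHeartbeats 1000000 in
/-- Lemma 2, second part: Within one epoch of local GD with
`0 < γ ≤ 1/(4LH)`:
`∑_{t=t_p}^{t_{p+1}−1} [(3/2)L V_t − (f(x̂_t) − f(x⋆))]
  ≤ −(1/2) ∑_{t=t_p}^{t_{p+1}−1} (f(x̂_t) − f(x⋆)) + 12Lγ²H²σ² (t_{p+1} − t_p)`. -/
theorem epoch_variance_gap_sum_bound {d M : ℕ} (hM : 0 < M) (L γ : ℝ)
    (hL : 0 < L)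
    (f : Fin M → EuclideanSpace ℝ (Fin d) → ℝ)
    (g : Fin M → EuclideanSpace ℝ (Fin d) → EuclideanSpace ℝ (Fin d))
    (hsc : ∀ m x y, 0 ≤ f m x - f m y - ⟪g m y, x - y⟫ ∧
      f m x - f m y - ⟪g m y, x - y⟫ ≤ L / 2 * ‖x - y‖ ^ 2)
    (xstar : EuclideanSpace ℝ (Fin d))
    (hmin : ∀ y, avgR (fun m => f m xstar) ≤ avgR (fun m => f m y))
    (x : ℕ → Fin M → EuclideanSpace ℝ (Fin d))
    (tp tp1 H : ℕ) (htp : tp < tp1) (hH1 : 1 ≤ H) (hH : tp1 - tp ≤ H)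
    (hγ0 : 0 < γ) (hγ : γ ≤ 1 / (4 * L * H))
    (hstart : ∀ m, x tp m = avgV (x tp))
    (hstep : ∀ t m, tp ≤ t → t + 1 < tp1 →
      x (t + 1) m = x t m - γ • g m (x t m)) :
    ∑ t ∈ Finset.Ico tp tp1,
        ((3 / 2) * L * avgR (fun m => ‖x t m - avgV (x t)‖ ^ 2)
          - (avgR (fun m => f m (avgV (x t))) - avgR (fun m => f m xstar))) ≤
      -(1 / 2) * ∑ t ∈ Finset.Ico tp tp1,
          (avgR (fun m => f m (avgV (x t))) - avgR (fun m => f m xstar))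
      + 12 * L * γ ^ 2 * H ^ 2 * avgR (fun m => ‖g m xstar‖ ^ 2) *
          ((tp1 - tp : ℕ) : ℝ) := by
  have hMne : (M:ℝ) ≠ 0 := Nat.cast_ne_zero.mpr hM.ne'
  have invM_nonneg : (0:ℝ) ≤ 1/(M:ℝ) := by positivity
  -- averaged Bregman identity
  have havgF : ∀ y z : EuclideanSpace ℝ (Fin d),
      avgR (fun m => f m y - f m z - ⟪g m z, y - z⟫)
        = avgR (fun m => f m y) - avgR (fun m => f m z)
          - ⟪(1/(M:ℝ)) • ∑ m, g m z, y - z⟫ := by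
    intro y z
    simp only [avgR, Finset.sum_sub_distrib]
    rw [real_inner_smul_left, sum_inner]
    ring
  -- upper bound for averaged f
  have hupp : ∀ y z : EuclideanSpace ℝ (Fin d),
      avgR (fun m => f m y) - avgR (fun m => f m z)
          - ⟪(1/(M:ℝ)) • ∑ m, g m z, y - z⟫ ≤ L/2 * ‖y - z‖^2 := by
    intro y z
    rw [← havgF]
    have h : ∑ m, (f m y - f m z - ⟪g m z, y - z⟫) ≤ ∑ m : Fin M, L/2 * ‖y - z‖^2 :=
      Finset.sum_le_sum fun m _ => (hsc m y z).2
    calc avgR (fun m => f m y - f m z - ⟪g m z, y - z⟫)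
        ≤ (1/(M:ℝ)) * ∑ m : Fin M, L/2 * ‖y - z‖^2 :=
          mul_le_mul_of_nonneg_left h invM_nonneg
      _ = L/2 * ‖y - z‖^2 := by
          rw [Finset.sum_const, card_univ, Fintype.card_fin, nsmul_eq_mul]
          field_simp
  -- average gradient at the optimum vanishes
  have hgbar : (1/(M:ℝ)) • ∑ m, g m xstar = 0 := by
    set G0 : EuclideanSpace ℝ (Fin d) := (1/(M:ℝ)) • ∑ m, g m xstar with hG0
    set y : EuclideanSpace ℝ (Fin d) := xstar - L⁻¹ • G0 with hy
    have h1 : 0 ≤ avgR (fun m => f m y) - avgR (fun m => f m xstar) :=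
      sub_nonneg.mpr (hmin y)
    have h2 := hupp y xstar
    have hyx : y - xstar = -(L⁻¹ • G0) := by rw [hy]; abel
    have hinner : ⟪G0, y - xstar⟫ = -(L⁻¹ * ‖G0‖^2) := by
      rw [hyx, inner_neg_right, real_inner_smul_right, real_inner_self_eq_norm_sq]
    have hnorm : ‖y - xstar‖^2 = L⁻¹^2 * ‖G0‖^2 := by
      rw [hyx, norm_neg, norm_smul, mul_pow, Real.norm_eq_abs, sq_abs]
    rw [hinner, hnorm] at h2
    have hinv : L * L⁻¹ = 1 := mul_inv_cancel₀ hL.ne'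
    have hhalf : L/2*(L⁻¹^2*‖G0‖^2) = 1/2*(L⁻¹*‖G0‖^2) := by field_simp
    have hq : L⁻¹ * ‖G0‖^2 ≤ 0 := by linarith
    have hN : ‖G0‖^2 ≤ 0 := by nlinarith [inv_pos.mpr hL, sq_nonneg ‖G0‖]
    have : ‖G0‖ = 0 := by nlinarith [norm_nonneg G0]
    exact norm_eq_zero.mp this
  -- cocoercivity
  have hcoco : ∀ m (a b : EuclideanSpace ℝ (Fin d)),
      ‖g m a - g m b‖^2 ≤ 2*L*(f m a - f m b - ⟪g m b, a - b⟫) := by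
    intro m a b
    set Δ : EuclideanSpace ℝ (Fin d) := g m a - g m b with hΔ
    set z : EuclideanSpace ℝ (Fin d) := a - L⁻¹ • Δ with hz
    have h1 := (hsc m z b).1
    have h2 := (hsc m z a).2
    have hza : z - a = -(L⁻¹ • Δ) := by rw [hz]; abel
    have hzb : z - b = (a - b) - L⁻¹ • Δ := by rw [hz]; abel
    have e1 : ⟪g m a, z - a⟫ = -(L⁻¹ * ⟪g m a, Δ⟫) := by
      rw [hza, inner_neg_right, real_inner_smul_right]
    have e2 : ⟪g m b, z - b⟫ = ⟪g m b, a - b⟫ - L⁻¹ * ⟪g m b, Δ⟫ := by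
      rw [hzb, inner_sub_right, real_inner_smul_right]
    have e3 : ‖z - a‖^2 = L⁻¹^2 * ‖Δ‖^2 := by
      rw [hza, norm_neg, norm_smul, mul_pow, Real.norm_eq_abs, sq_abs]
    have e4 : ⟪g m a, Δ⟫ - ⟪g m b, Δ⟫ = ‖Δ‖^2 := by
      rw [← inner_sub_left, ← hΔ, real_inner_self_eq_norm_sq]
    rw [e1, e3] at h2
    rw [e2] at h1
    have hinv : L * L⁻¹ = 1 := mul_inv_cancel₀ hL.ne'
    have hhalf : L/2*(L⁻¹^2*‖Δ‖^2) = 1/2*(L⁻¹*‖Δ‖^2) := by field_simp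
    have e5 : L⁻¹ * ⟪g m a, Δ⟫ - L⁻¹ * ⟪g m b, Δ⟫ = L⁻¹*‖Δ‖^2 := by
      rw [← mul_sub, e4]
    have k : L⁻¹*‖Δ‖^2 ≤ 2*(f m a - f m b - ⟪g m b, a - b⟫) := by linarith
    have k2 := mul_le_mul_of_nonneg_left k hL.le
    rw [← mul_assoc, hinv, one_mul] at k2
    linarith
  -- trajectory representation within the epoch
  have hrep : ∀ t, tp ≤ t → t < tp1 → ∀ m,
      x t m = avgV (x tp) - γ • ∑ j ∈ Finset.Ico tp t, g m (x j m) := by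
    intro t ht
    induction t, ht using Nat.le_induction with
    | base => intro _ m; simp [hstart m]
    | succ t ht ih =>
      intro ht1 m
      have ht' : t < tp1 := by omega
      rw [hstep t m ht ht1, Finset.sum_Ico_succ_top ht, ih ht' m, smul_add]
      abel
  have hconst : (1/(M:ℝ)) • ∑ _m : Fin M, avgV (x tp) = avgV (x tp) := by
    rw [Finset.sum_const, card_univ, Fintype.card_fin, ← Nat.cast_smul_eq_nsmul ℝ, smul_smul]
    rw [show (1/(M:ℝ)) * (M:ℝ) = 1 by field_simp, one_smul]
  have hxhat : ∀ t, tp ≤ t → t < tp1 → avgV (x t)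
      = avgV (x tp) - γ • ∑ j ∈ Finset.Ico tp t,
          ((1/(M:ℝ)) • ∑ m', g m' (x j m')) := by
    intro t ht ht1
    have h : avgV (x t) = (1/(M:ℝ)) • ∑ m,
        (avgV (x tp) - γ • ∑ j ∈ Finset.Ico tp t, g m (x j m)) := by
      rw [avgV]; congr 1; exact Finset.sum_congr rfl fun m _ => hrep t ht ht1 m
    rw [h, Finset.sum_sub_distrib, smul_sub, hconst]
    congr 1
    rw [← Finset.smul_sum, smul_comm, Finset.sum_comm, Finset.smul_sum]
  have hdiff : ∀ t, tp ≤ t → t < tp1 → ∀ m, x t m - avgV (x t)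
      = -(γ • ∑ j ∈ Finset.Ico tp t,
          (g m (x j m) - (1/(M:ℝ)) • ∑ m', g m' (x j m'))) := by
    intro t ht ht1 m
    rw [hrep t ht ht1 m, hxhat t ht ht1, Finset.sum_sub_distrib, smul_sub]
    abel
  -- single-iterate variance bound
  have hVt : ∀ t, tp ≤ t → t < tp1 →
      avgR (fun m => ‖x t m - avgV (x t)‖^2)
        ≤ γ^2 * ((t - tp : ℕ):ℝ) *
            ∑ j ∈ Finset.Ico tp tp1, avgR (fun m => ‖g m (x j m)‖^2) := by
    intro t ht ht1
    have h1 : ∀ m : Fin M, ‖x t m - avgV (x t)‖^2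
        ≤ γ^2 * ((t - tp:ℕ):ℝ) * ∑ j ∈ Finset.Ico tp t,
            ‖g m (x j m) - (1/(M:ℝ)) • ∑ m', g m' (x j m')‖^2 := by
      intro m
      have hnd : ‖x t m - avgV (x t)‖^2
          = γ^2 * ‖∑ j ∈ Finset.Ico tp t,
              (g m (x j m) - (1/(M:ℝ)) • ∑ m', g m' (x j m'))‖^2 := by
        rw [hdiff t ht ht1 m, norm_neg, norm_smul, mul_pow, Real.norm_eq_abs, sq_abs]
      rw [hnd]
      have h := normsq_sum_le (Finset.Ico tp t)
        (fun j => g m (x j m) - (1/(M:ℝ)) • ∑ m', g m' (x j m'))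
      rw [Nat.card_Ico] at h
      calc γ^2 * ‖∑ j ∈ Finset.Ico tp t,
              (g m (x j m) - (1/(M:ℝ)) • ∑ m', g m' (x j m'))‖^2
          ≤ γ^2 * (((t - tp:ℕ):ℝ) * ∑ j ∈ Finset.Ico tp t,
              ‖g m (x j m) - (1/(M:ℝ)) • ∑ m', g m' (x j m')‖^2) :=
            mul_le_mul_of_nonneg_left h (sq_nonneg γ)
        _ = γ^2 * ((t - tp:ℕ):ℝ) * ∑ j ∈ Finset.Ico tp t,
              ‖g m (x j m) - (1/(M:ℝ)) • ∑ m', g m' (x j m')‖^2 := by ring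
    simp only [avgR]
    calc (1/(M:ℝ)) * ∑ m, ‖x t m - avgV (x t)‖^2
        ≤ (1/(M:ℝ)) * ∑ m : Fin M, (γ^2 * ((t - tp:ℕ):ℝ) * ∑ j ∈ Finset.Ico tp t,
            ‖g m (x j m) - (1/(M:ℝ)) • ∑ m', g m' (x j m')‖^2) :=
          mul_le_mul_of_nonneg_left (Finset.sum_le_sum fun m _ => h1 m) invM_nonneg
      _ = γ^2 * ((t - tp:ℕ):ℝ) * ∑ j ∈ Finset.Ico tp t, ((1/(M:ℝ)) *
            ∑ m : Fin M, ‖g m (x j m) - (1/(M:ℝ)) • ∑ m', g m' (x j m')‖^2) := by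
          simp only [Finset.mul_sum]
          rw [Finset.sum_comm]
          refine Finset.sum_congr rfl fun j _ => Finset.sum_congr rfl fun m _ => by ring
      _ ≤ γ^2 * ((t - tp:ℕ):ℝ) * ∑ j ∈ Finset.Ico tp t, ((1/(M:ℝ)) *
            ∑ m : Fin M, ‖g m (x j m)‖^2) := by
          apply mul_le_mul_of_nonneg_left ?_ (by positivity)
          apply Finset.sum_le_sum
          intro j _
          exact mul_le_mul_of_nonneg_left
            (var_le_second hM (fun m => g m (x j m))) invM_nonneg
      _ ≤ γ^2 * ((t - tp:ℕ):ℝ) * ∑ j ∈ Finset.Ico tp tp1, ((1/(M:ℝ)) *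
            ∑ m : Fin M, ‖g m (x j m)‖^2) := by
          apply mul_le_mul_of_nonneg_left ?_ (by positivity)
          apply Finset.sum_le_sum_of_subset_of_nonneg
            (Finset.Ico_subset_Ico_right ht1.le)
          intro j _ _
          positivity
  -- per-iterate gradient second-moment bound
  have ha : ∀ j, avgR (fun m => ‖g m (x j m)‖^2)
      ≤ 4*L^2 * avgR (fun m => ‖x j m - avgV (x j)‖^2)
        + 8*L*(avgR (fun m => f m (avgV (x j))) - avgR (fun m => f m xstar))
        + 2*avgR (fun m => ‖g m xstar‖^2) := by
    intro j
    have hm : ∀ m : Fin M, ‖g m (x j m)‖^2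
        ≤ 4*L^2*‖x j m - avgV (x j)‖^2
          + 8*L*(f m (avgV (x j)) - f m xstar - ⟪g m xstar, avgV (x j) - xstar⟫)
          + 2*‖g m xstar‖^2 := by
      intro m
      have hy := young3 (g m (x j m) - g m (avgV (x j)))
        (g m (avgV (x j)) - g m xstar) (g m xstar)
      rw [show g m (x j m) - g m (avgV (x j)) + (g m (avgV (x j)) - g m xstar)
          + g m xstar = g m (x j m) by abel] at hy
      have c1 := hcoco m (x j m) (avgV (x j))
      have c2 := hcoco m (avgV (x j)) xstar
      have d1 := (hsc m (x j m) (avgV (x j))).2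
      nlinarith [mul_le_mul_of_nonneg_left d1 (by positivity : (0:ℝ) ≤ 2*L)]
    have hD : avgR (fun m => f m (avgV (x j)) - f m xstar
        - ⟪g m xstar, avgV (x j) - xstar⟫)
        = avgR (fun m => f m (avgV (x j))) - avgR (fun m => f m xstar) := by
      rw [havgF, hgbar, inner_zero_left, sub_zero]
    rw [← hD]
    simp only [avgR]
    calc (1/(M:ℝ)) * ∑ m, ‖g m (x j m)‖^2
        ≤ (1/(M:ℝ)) * ∑ m : Fin M, (4*L^2*‖x j m - avgV (x j)‖^2
            + 8*L*(f m (avgV (x j)) - f m xstar - ⟪g m xstar, avgV (x j) - xstar⟫)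
            + 2*‖g m xstar‖^2) :=
          mul_le_mul_of_nonneg_left (Finset.sum_le_sum fun m _ => hm m) invM_nonneg
      _ = 4*L^2*((1/(M:ℝ)) * ∑ m, ‖x j m - avgV (x j)‖^2)
            + 8*L*((1/(M:ℝ)) * ∑ m, (f m (avgV (x j)) - f m xstar
                - ⟪g m xstar, avgV (x j) - xstar⟫))
            + 2*((1/(M:ℝ)) * ∑ m, ‖g m xstar‖^2) := by
          rw [Finset.sum_add_distrib, Finset.sum_add_distrib, ← Finset.mul_sum,
            ← Finset.mul_sum, ← Finset.mul_sum]
          ring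
  -- abbreviations as sums
  have hgauss : ∑ t ∈ Finset.Ico tp tp1, ((t - tp : ℕ):ℝ)
      = ((tp1 - tp : ℕ):ℝ) * (((tp1 - tp : ℕ):ℝ) - 1)/2 := by
    rw [Finset.sum_Ico_eq_sum_range]
    simp only [Nat.add_sub_cancel_left]
    exact gauss_sum_real (tp1 - tp)
  -- final assembly
  rw [Finset.sum_sub_distrib, ← Finset.mul_sum]
  set A := ∑ t ∈ Finset.Ico tp tp1, avgR (fun m => ‖x t m - avgV (x t)‖ ^ 2) with hAdef
  set G := ∑ t ∈ Finset.Ico tp tp1,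
      (avgR (fun m => f m (avgV (x t))) - avgR (fun m => f m xstar)) with hGdef
  set s2 := avgR (fun m => ‖g m xstar‖ ^ 2) with hs2def
  set Sa := ∑ j ∈ Finset.Ico tp tp1, avgR (fun m => ‖g m (x j m)‖^2) with hSadef
  set lenR := ((tp1 - tp : ℕ):ℝ) with hlenRdef
  have hlenH : lenR ≤ (H:ℝ) := by exact_mod_cast Nat.cast_le.mpr hH
  have hlen1 : (1:ℝ) ≤ lenR := by
    rw [hlenRdef]
    have h : 1 ≤ tp1 - tp := by omega
    exact_mod_cast h
  have hH1R : (1:ℝ) ≤ (H:ℝ) := by exact_mod_cast hH1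
  have hA0 : 0 ≤ A := by
    refine Finset.sum_nonneg fun t _ => ?_
    simp only [avgR]; positivity
  have hG0 : 0 ≤ G := Finset.sum_nonneg fun t _ => sub_nonneg.mpr (hmin _)
  have hs20 : 0 ≤ s2 := by rw [hs2def]; simp only [avgR]; positivity
  have hSa0 : 0 ≤ Sa := by
    refine Finset.sum_nonneg fun j _ => ?_
    simp only [avgR]; positivity
  have hA1 : A ≤ γ^2 * (lenR*(lenR - 1)/2) * Sa := by
    calc A ≤ ∑ t ∈ Finset.Ico tp tp1, (γ^2 * ((t - tp : ℕ):ℝ) * Sa) :=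
          Finset.sum_le_sum fun t htm => by
            have h := hVt t (Finset.mem_Ico.mp htm).1 (Finset.mem_Ico.mp htm).2
            rw [hSadef]; exact h
      _ = γ^2 * (∑ t ∈ Finset.Ico tp tp1, ((t - tp : ℕ):ℝ)) * Sa := by
          rw [← Finset.sum_mul, ← Finset.mul_sum]
      _ = γ^2 * (lenR*(lenR - 1)/2) * Sa := by rw [hgauss]
  have hSabound : Sa ≤ 4*L^2*A + 8*L*G + 2*s2*lenR := by
    calc Sa ≤ ∑ j ∈ Finset.Ico tp tp1,
          (4*L^2 * avgR (fun m => ‖x j m - avgV (x j)‖^2)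
            + 8*L*(avgR (fun m => f m (avgV (x j))) - avgR (fun m => f m xstar))
            + 2*s2) := Finset.sum_le_sum fun j _ => ha j
      _ = 4*L^2*A + 8*L*G + 2*s2*lenR := by
          rw [Finset.sum_add_distrib, Finset.sum_add_distrib, ← Finset.mul_sum,
            ← Finset.mul_sum, Finset.sum_const, Nat.card_Ico, nsmul_eq_mul,
            hAdef, hGdef, hlenRdef]
          ring
  have hγ4 : γ * (4*L*(H:ℝ)) ≤ 1 := by
    rw [← le_div_iff₀ (by positivity)]
    exact hγ
  have h16 : L^2*γ^2*(H:ℝ)^2 ≤ 1/16 := by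
    have h0 : (0:ℝ) ≤ γ * (4*L*(H:ℝ)) := by positivity
    have hsq : (γ*(4*L*(H:ℝ))) * (γ*(4*L*(H:ℝ))) ≤ 1 :=
      mul_le_one₀ hγ4 h0 hγ4
    nlinarith [hsq]
  have hlen2 : lenR*(lenR - 1)/2 ≤ (H:ℝ)^2/2 := by nlinarith [hlenH, hlen1, hH1R]
  have hcomb : A ≤ γ^2*((H:ℝ)^2/2) * (4*L^2*A + 8*L*G + 2*s2*lenR) := by
    calc A ≤ γ^2 * (lenR*(lenR - 1)/2) * Sa := hA1
      _ ≤ γ^2*((H:ℝ)^2/2) * Sa := by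
          apply mul_le_mul_of_nonneg_right ?_ hSa0
          nlinarith [mul_le_mul_of_nonneg_left hlen2 (sq_nonneg γ)]
      _ ≤ γ^2*((H:ℝ)^2/2) * (4*L^2*A + 8*L*G + 2*s2*lenR) :=
          mul_le_mul_of_nonneg_left hSabound (by positivity)
  have k1 : A ≤ 1/8*A + 4*γ^2*(H:ℝ)^2*L*G + γ^2*(H:ℝ)^2*s2*lenR := by
    nlinarith [mul_le_mul_of_nonneg_right h16 hA0, hcomb]
  have k2 : 7/8*(L*A) ≤ 4*γ^2*(H:ℝ)^2*L^2*G + γ^2*(H:ℝ)^2*L*s2*lenR := by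
    nlinarith [mul_le_mul_of_nonneg_left k1 hL.le]
  have k3 : γ^2*(H:ℝ)^2*L^2*G ≤ 1/16*G := by
    nlinarith [mul_le_mul_of_nonneg_right h16 hG0]
  have k4 : (0:ℝ) ≤ γ^2*(H:ℝ)^2*L*s2*lenR := by
    have : (0:ℝ) ≤ lenR := by linarith
    positivity
  linarith [k2, k3, k4]
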